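/- Let $a, b, c$ be nonzero rationals, $v_1, v_2, v_3$ nonzero rationals, $m_1, m_2, m_3$ positive integers, and $y_u$ a nonzero rational. Define $w_1 = \frac{(a^2 b^2 v_3^{2m_3} + a^2 c^2 v_2^{2m_2} - b^2 c^2 v_1^{2m_1})\, y_u}{2 a b c\, v_2^{m_2} v_3^{m_3}}$, $w_2 = \frac{(a^2 b^2 v_3^{2m_3} - a^2 c^2 v_2^{2m_2} + b^2 c^2 v_1^{2m_1})\, y_u}{2 a b c\, v_1^{m_1} v_3^{m_3}}$, $w_3 = \frac{(-a^2 b^2 v_3^{2m_3} + a^2 c^2 v_2^{2m_2} + b^2 c^2 v_1^{2m_1})\, y_u}{2 a b c\, v_1^{m_1} v_2^{m_2}}$, and let $F = y_u^2$. Then $v_2^{2m_2} v_3^{2m_3}(w_1^2 - a^2 F) = v_1^{2m_1} v_3^{2m_3}(w_2^2 - b^2 F) = v_1^{2m_1} v_2^{2m_2}(w_3^2 - c^2 F)$. -/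
import Mathlib


theorem doubled_point_on_H_curve (a b c v1 v2 v3 yu : ℚ)
    (ha : a ≠ 0) (hb : b ≠ 0) (hc : c ≠ 0)
    (hv1 : v1 ≠ 0) (hv2 : v2 ≠ 0) (hv3 : v3 ≠ 0) (hyu : yu ≠ 0)
    (m1 m2 m3 : ℕ) (hm1 : 0 < m1) (hm2 : 0 < m2) (hm3 : 0 < m3) :
    let F := yu ^ 2
    let w1 := (a ^ 2 * b ^ 2 * v3 ^ (2 * m3) + a ^ 2 * c ^ 2 * v2 ^ (2 * m2)
        - b ^ 2 * c ^ 2 * v1 ^ (2 * m1)) * yu / (2 * a * b * c * v2 ^ m2 * v3 ^ m3)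
    let w2 := (a ^ 2 * b ^ 2 * v3 ^ (2 * m3) - a ^ 2 * c ^ 2 * v2 ^ (2 * m2)
        + b ^ 2 * c ^ 2 * v1 ^ (2 * m1)) * yu / (2 * a * b * c * v1 ^ m1 * v3 ^ m3)
    let w3 := (-(a ^ 2 * b ^ 2 * v3 ^ (2 * m3)) + a ^ 2 * c ^ 2 * v2 ^ (2 * m2)
        + b ^ 2 * c ^ 2 * v1 ^ (2 * m1)) * yu / (2 * a * b * c * v1 ^ m1 * v2 ^ m2)
    v2 ^ (2 * m2) * v3 ^ (2 * m3) * (w1 ^ 2 - a ^ 2 * F)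
      = v1 ^ (2 * m1) * v3 ^ (2 * m3) * (w2 ^ 2 - b ^ 2 * F) ∧
    v1 ^ (2 * m1) * v3 ^ (2 * m3) * (w2 ^ 2 - b ^ 2 * F)
      = v1 ^ (2 * m1) * v2 ^ (2 * m2) * (w3 ^ 2 - c ^ 2 * F) := by
  intro F w1 w2 w3
  have h1 : v1 ^ m1 ≠ 0 := pow_ne_zero _ hv1
  have h2 : v2 ^ m2 ≠ 0 := pow_ne_zero _ hv2
  have h3 : v3 ^ m3 ≠ 0 := pow_ne_zero _ hv3
  simp only [F, w1, w2, w3, pow_mul, mul_comm 2]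
  constructor <;> field_simp <;> ring
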